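/- Let G be a group. On the set of infinite virtually cyclic subgroups of G of type I, the relation V₁ ∼ V₂ defined by 'there exists g ∈ G such that gV₁g⁻¹ ∩ V₂ is infinite' is an equivalence relation. -/

import Mathlib

section Aux

variable {G : Type*} [Group G]

lemma aux_infinite_of_le {K L : Subgroup G} (h : K ≤ L) (hK : Infinite K) : Infinite L :=
  Infinite.of_injective (Subgroup.inclusion h) (Subgroup.inclusion_injective h)

lemma aux_infinite_of_finiteIndex [Infinite G] (H : Subgroup G) [H.FiniteIndex] : Infinite H := by
  by_contra hfin
  rw [not_infinite_iff_finite] at hfin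
  haveI := hfin
  have h1 := Subgroup.index_mul_card H
  have h2 : H.index ≠ 0 := Subgroup.FiniteIndex.index_ne_zero
  have h3 : Nat.card H ≠ 0 := Nat.card_pos.ne'
  exact mul_ne_zero h2 h3 (h1.trans (Nat.card_eq_zero_of_infinite (α := G)))

lemma aux_infinite_subgroupOf {K L : Subgroup G} (h : K ≤ L) (hK : Infinite K) :
    Infinite (K.subgroupOf L) :=
  Infinite.of_injective (Subgroup.subgroupOfEquivOfLe h).symm
    (Subgroup.subgroupOfEquivOfLe h).symm.injective

lemma aux_infinite_subgroupOf' {K L : Subgroup G} (h : K ≤ L) (hK : Infinite (K.subgroupOf L)) :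
    Infinite K :=
  Infinite.of_injective (Subgroup.subgroupOfEquivOfLe h)
    (Subgroup.subgroupOfEquivOfLe h).injective

/-- In a cyclic group, a subgroup containing a nontrivial element has finite index. -/
lemma aux_finiteIndex_of_ne_one (hc : IsCyclic G) (K : Subgroup G) {x : G}
    (hx : x ∈ K) (hx1 : x ≠ 1) : K.FiniteIndex := by
  obtain ⟨c, hc⟩ := hc.exists_generator
  obtain ⟨m, rfl⟩ := hc x
  have hm : m ≠ 0 := by rintro rfl; simp at hx1
  set n : ℕ := m.natAbs with hn
  have hnpos : 0 < (n : ℤ) := by positivity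
  have hcn : c ^ (n : ℤ) ∈ K := by
    rcases Int.natAbs_eq m with h | h
    · rwa [← h]
    · rw [← neg_neg ((n : ℤ)), zpow_neg, ← h]
      exact K.inv_mem hx
  have : Finite (G ⧸ K) := by
    refine Finite.of_surjective (fun i : Fin n => QuotientGroup.mk (c ^ (i : ℕ))) ?_
    intro q
    induction q using QuotientGroup.induction_on with
    | H a =>
      obtain ⟨k, rfl⟩ := hc a
      set r : ℤ := k % (n : ℤ) with hr
      have hr0 : 0 ≤ r := Int.emod_nonneg k (by positivity)
      have hrn : r < (n : ℤ) := Int.emod_lt_of_pos k hnpos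
      refine ⟨⟨r.toNat, by omega⟩, ?_⟩
      simp only
      rw [QuotientGroup.eq]
      have : (c ^ ((⟨r.toNat, by omega⟩ : Fin n) : ℕ))⁻¹ * c ^ k = c ^ (k - r) := by
        have : ((⟨r.toNat, by omega⟩ : Fin n) : ℕ) = r.toNat := rfl
        rw [this, ← zpow_natCast, Int.toNat_of_nonneg hr0, ← zpow_neg, ← zpow_add]
        ring_nf
      rw [this]
      have hdiv : k - r = (n : ℤ) * (k / (n : ℤ)) := by
        have := Int.mul_ediv_add_emod k (n : ℤ)
        omega
      rw [hdiv, zpow_mul]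
      exact K.zpow_mem hcn _
  exact Subgroup.finiteIndex_of_finite_quotient (H := K)

/-- In an infinite virtually cyclic group, every infinite subgroup has finite index. -/
lemma aux_finiteIndex_of_infinite [Infinite G] (hv : ∃ H : Subgroup G, IsCyclic ↥H ∧ H.FiniteIndex)
    (H : Subgroup G) (hH : Infinite H) : H.FiniteIndex := by
  obtain ⟨C, hCcyc, hCfi⟩ := hv
  haveI := hCfi
  haveI : Infinite C := aux_infinite_of_finiteIndex C
  -- H ⊓ C is infinite
  haveI : Infinite H := hH
  haveI : Infinite ((H ⊓ C).subgroupOf H) := by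
    rw [Subgroup.inf_subgroupOf_left]
    exact aux_infinite_of_finiteIndex _
  have hinf : Infinite (H ⊓ C : Subgroup G) :=
    aux_infinite_subgroupOf' inf_le_left ‹_›
  -- hence (H ⊓ C).subgroupOf C is a nontrivial subgroup of the cyclic group C
  haveI hinf2 : Infinite ((H ⊓ C).subgroupOf C) := aux_infinite_subgroupOf inf_le_right hinf
  haveI : Nontrivial ((H ⊓ C).subgroupOf C) := by
    haveI := hinf2
    infer_instance
  obtain ⟨x, hx1⟩ := exists_ne (1 : ((H ⊓ C).subgroupOf C))
  have hK : ((H ⊓ C).subgroupOf C).FiniteIndex := by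
    refine aux_finiteIndex_of_ne_one hCcyc _ x.2 ?_
    intro hx
    exact hx1 (Subtype.ext hx)
  -- combine indices
  have h1 : (H ⊓ C).relIndex C * C.index = (H ⊓ C).index :=
    Subgroup.relIndex_mul_index inf_le_right
  have h2 : (H ⊓ C).index ≠ 0 := by
    rw [← h1]
    exact mul_ne_zero hK.index_ne_zero hCfi.index_ne_zero
  haveI : (H ⊓ C).FiniteIndex := ⟨h2⟩
  exact Subgroup.finiteIndex_of_le (H := H ⊓ C) inf_le_left

lemma aux_conj_comp (g h : G) :
    (MulAut.conj h).toMonoidHom.comp (MulAut.conj g).toMonoidHom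
      = (MulAut.conj (h * g)).toMonoidHom := by
  ext x
  simp [mul_assoc]

lemma aux_map_conj_infinite (g : G) (K : Subgroup G) (hK : Infinite K) :
    Infinite (Subgroup.map (MulAut.conj g).toMonoidHom K) :=
  Infinite.of_injective (K.equivMapOfInjective _ (MulAut.conj g).injective)
    (K.equivMapOfInjective _ (MulAut.conj g).injective).injective

lemma aux_conj_one_map (K : Subgroup G) :
    Subgroup.map (MulAut.conj (1 : G)).toMonoidHom K = K := by
  have h : (MulAut.conj (1 : G)).toMonoidHom = MonoidHom.id G := by
    ext x; simp
  rw [h, Subgroup.map_id]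

end Aux

/-- A group is virtually cyclic if it contains a cyclic subgroup of finite index. -/
def VirtuallyCyclic (G : Type*) [Group G] : Prop :=
  ∃ H : Subgroup G, IsCyclic ↥H ∧ H.FiniteIndex

/-- An infinite virtually cyclic group is of type I if it admits a surjective
homomorphism onto the infinite cyclic group ℤ. -/
def IsTypeI (G : Type*) [Group G] : Prop :=
  ∃ f : G →* Multiplicative ℤ, Function.Surjective f

/-- An infinite virtually cyclic group is of type II if it admits a surjective
homomorphism onto the infinite dihedral group D∞. -/
def IsTypeII (G : Type*) [Group G] : Prop :=
  ∃ f : G →* DihedralGroup 0, Function.Surjective f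

/-- On the set of infinite virtually cyclic subgroups of `G` of type I, the relation
`V₁ ∼ V₂ ⟺ ∃ g ∈ G, gV₁g⁻¹ ∩ V₂ is infinite` is an equivalence relation. -/
theorem commensurability_equivalence (G : Type*) [Group G] :
    Equivalence (fun V₁ V₂ : {V : Subgroup G // Infinite ↥V ∧ VirtuallyCyclic ↥V ∧ IsTypeI ↥V} =>
      ∃ g : G, Infinite ↥(Subgroup.map (MulAut.conj g).toMonoidHom V₁.1 ⊓ V₂.1)) := by
  constructor
  · -- reflexivity
    intro V
    refine ⟨1, ?_⟩
    have h : Subgroup.map (MulAut.conj (1:G)).toMonoidHom V.1 ⊓ V.1 = V.1 := by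
      rw [aux_conj_one_map, inf_idem]
    rw [h]
    exact V.2.1
  · -- symmetry
    rintro V₁ V₂ ⟨g, hg⟩
    refine ⟨g⁻¹, ?_⟩
    have key : Subgroup.map (MulAut.conj g⁻¹).toMonoidHom V₂.1 ⊓ V₁.1
        = Subgroup.map (MulAut.conj g⁻¹).toMonoidHom
            (V₂.1 ⊓ Subgroup.map (MulAut.conj g).toMonoidHom V₁.1) := by
      rw [Subgroup.map_inf _ _ _ (MulAut.conj g⁻¹).injective, Subgroup.map_map,
        aux_conj_comp, inv_mul_cancel, aux_conj_one_map]
    rw [key]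
    refine aux_map_conj_infinite _ _ ?_
    rw [inf_comm]
    exact hg
  · -- transitivity
    rintro V₁ V₂ V₃ ⟨g, hg⟩ ⟨h, hh⟩
    refine ⟨h * g, ?_⟩
    set A := V₁.1 with hA
    set B := V₂.1 with hB
    set C := V₃.1 with hC
    set P : Subgroup G := Subgroup.map (MulAut.conj g).toMonoidHom A ⊓ B with hP
    set Q' : Subgroup G := Subgroup.map (MulAut.conj h⁻¹).toMonoidHom
      (Subgroup.map (MulAut.conj h).toMonoidHom B ⊓ C) with hQ'
    have hQ'inf : Infinite Q' := aux_map_conj_infinite _ _ hh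
    have hQ'le : Q' ≤ B := by
      rw [hQ']
      intro x hx
      obtain ⟨y, hy, rfl⟩ := hx
      obtain ⟨z, hz, rfl⟩ := hy.1
      simpa [mul_assoc] using hz
    have hPle : P ≤ B := inf_le_right
    -- both P and Q' have finite index in B
    haveI hBinf : Infinite B := V₂.2.1
    have hPfi : (P.subgroupOf B).FiniteIndex :=
      aux_finiteIndex_of_infinite V₂.2.2.1 _ (aux_infinite_subgroupOf hPle hg)
    have hQfi : (Q'.subgroupOf B).FiniteIndex :=
      aux_finiteIndex_of_infinite V₂.2.2.1 _ (aux_infinite_subgroupOf hQ'le hQ'inf)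
    haveI := hPfi; haveI := hQfi
    haveI : Infinite ((P.subgroupOf B) ⊓ (Q'.subgroupOf B) : Subgroup B) :=
      aux_infinite_of_finiteIndex _
    have hPQ : Infinite (P ⊓ Q' : Subgroup G) := by
      refine aux_infinite_subgroupOf' (le_trans inf_le_left hPle) ?_
      rw [Subgroup.subgroupOf, Subgroup.comap_inf]
      exact ‹_›
    -- map by conj h
    have hmap : Infinite (Subgroup.map (MulAut.conj h).toMonoidHom (P ⊓ Q')) :=
      aux_map_conj_infinite _ _ hPQ
    refine aux_infinite_of_le ?_ hmap
    intro x hx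
    obtain ⟨y, hy, rfl⟩ := hx
    constructor
    · -- in map (conj (h*g)) A
      obtain ⟨z, hz, hzy⟩ := hy.1.1
      refine ⟨z, hz, ?_⟩
      rw [← aux_conj_comp]
      simp only [MonoidHom.comp_apply]
      rw [hzy]
    · -- in C
      have := hy.2
      rw [hQ'] at this
      obtain ⟨w, hw, hwy⟩ := this
      have : (MulAut.conj h).toMonoidHom y = w := by
        rw [← hwy]
        simp [mul_assoc]
      rw [this]
      exact hw.2
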